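/- Let M = c·a aᵀ + Σ_{i>1} cᵢ aᵢaᵢᵀ + N where a = a₁,…,aₙ ∈ ℝ^d are orthonormal, c ≥ 1 - η with η ≤ 0.01, 0 ≤ cᵢ ≤ η for i > 1, and ‖N‖ ≤ ε. Then for any 2η < 1 - 2η, taking κ with 2η ≤ κ ≤ 1-2η, one has ‖M - κ a aᵀ‖ ≤ ‖M‖ - κ + 2ε; consequently the top unit eigenvector u of M satisfies ⟨u, a⟩² ≥ 1 - 2ε/κ. -/

import Mathlib

open Matrix
open scoped Kronecker

noncomputable def specNorm {m n : Type*} [Fintype m] [Fintype n] [DecidableEq n]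
    (M : Matrix m n ℝ) : ℝ :=
  ‖LinearMap.toContinuousLinearMap (Matrix.toEuclideanLin M)‖

noncomputable def frobNorm {m n : Type*} [Fintype m] [Fintype n]
    (M : Matrix m n ℝ) : ℝ :=
  Real.sqrt (∑ i, ∑ j, (M i j) ^ 2)

section helpers
variable {d : ℕ}

noncomputable def ev (x : Fin d → ℝ) : EuclideanSpace ℝ (Fin d) := (WithLp.equiv 2 _).symm x

lemma ev_inner (x y : Fin d → ℝ) : inner (𝕜 := ℝ) (ev x) (ev y) = x ⬝ᵥ y := by
  simp [ev, PiLp.inner_apply, dotProduct, RCLike.inner_apply, mul_comm]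

lemma ev_norm_sq (x : Fin d → ℝ) : ‖ev x‖ ^ 2 = x ⬝ᵥ x := by
  rw [← real_inner_self_eq_norm_sq, ev_inner]

lemma toEuc_apply (A : Matrix (Fin d) (Fin d) ℝ) (x : Fin d → ℝ) :
    Matrix.toEuclideanLin A (ev x) = ev (A.mulVec x) := by
  rfl

lemma specNorm_mulVec_le (A : Matrix (Fin d) (Fin d) ℝ) (x : Fin d → ℝ) :
    ‖ev (A.mulVec x)‖ ≤ specNorm A * ‖ev x‖ := by
  rw [← toEuc_apply]
  exact (LinearMap.toContinuousLinearMap (Matrix.toEuclideanLin A)).le_opNorm (ev x)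

lemma specNorm_le_bound (A : Matrix (Fin d) (Fin d) ℝ) (C : ℝ) (hC : 0 ≤ C)
    (h : ∀ x : Fin d → ℝ, ‖ev (A.mulVec x)‖ ≤ C * ‖ev x‖) : specNorm A ≤ C := by
  refine ContinuousLinearMap.opNorm_le_bound _ hC fun x => ?_
  have := h (WithLp.equiv 2 _ x)
  simpa [ev, toEuc_apply, Matrix.toEuclideanLin_apply] using this

lemma specNorm_quadform (A : Matrix (Fin d) (Fin d) ℝ) (x : Fin d → ℝ) (hx : x ⬝ᵥ x = 1) :
    |x ⬝ᵥ A.mulVec x| ≤ specNorm A := by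
  have hnx : ‖ev x‖ = 1 := by
    have := ev_norm_sq x
    rw [hx] at this
    nlinarith [norm_nonneg (ev x)]
  calc |x ⬝ᵥ A.mulVec x| = |inner (𝕜 := ℝ) (ev x) (ev (A.mulVec x))| := by rw [ev_inner]
    _ ≤ ‖ev x‖ * ‖ev (A.mulVec x)‖ := abs_real_inner_le_norm _ _
    _ ≤ 1 * (specNorm A * 1) := by
        rw [hnx]
        have := specNorm_mulVec_le A x
        rw [hnx] at this
        simpa using this
    _ = specNorm A := by ring

lemma specNorm_add_le (A B : Matrix (Fin d) (Fin d) ℝ) :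
    specNorm (A + B) ≤ specNorm A + specNorm B := by
  unfold specNorm
  rw [map_add, map_add]
  exact norm_add_le _ _

lemma vecMulVec_mulVec' (w v x : Fin d → ℝ) :
    (Matrix.vecMulVec w v).mulVec x = (v ⬝ᵥ x) • w := by
  ext i
  simp [Matrix.mulVec, Matrix.vecMulVec_apply, dotProduct, Finset.sum_mul, Finset.mul_sum,
    mul_comm, mul_assoc, mul_left_comm]

lemma sum_mulVec' {ι : Type*} (s : Finset ι) (A : ι → Matrix (Fin d) (Fin d) ℝ) (x : Fin d → ℝ) :
    (∑ i ∈ s, A i).mulVec x = ∑ i ∈ s, (A i).mulVec x := by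
  ext j
  simp only [Matrix.mulVec, dotProduct, Finset.sum_apply, Matrix.sum_apply, Finset.sum_mul]
  rw [Finset.sum_comm]

end helpers

/-- For `M = c a₀a₀ᵀ + Σ_{i≠0} cᵢ aᵢaᵢᵀ + N` with `c ≥ 1 - η`, `0 ≤ cᵢ ≤ η ≤ 0.01` and
`‖N‖ ≤ ε`: for `2η ≤ κ ≤ 1 - 2η` one has `‖M - κ a₀a₀ᵀ‖ ≤ ‖M‖ - κ + 2ε`, and the top
eigenvector `u` of `M` satisfies `⟨u,a₀⟩² ≥ 1 - 2ε/κ`. -/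
theorem top_eigenvector_correlates {d n : ℕ}
    (a : Fin n → Fin d → ℝ) (i0 : Fin n)
    (ha : ∀ i j, a i ⬝ᵥ a j = if i = j then (1 : ℝ) else 0)
    (c η ε κ : ℝ) (co : Fin n → ℝ)
    (hη0 : 0 ≤ η) (hη : η ≤ 0.01) (hc : 1 - η ≤ c)
    (hco : ∀ i, i ≠ i0 → 0 ≤ co i ∧ co i ≤ η)
    (N M : Matrix (Fin d) (Fin d) ℝ) (hNsym : N.IsSymm) (hN : specNorm N ≤ ε)
    (hM : M = c • Matrix.vecMulVec (a i0) (a i0) +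
      (∑ i ∈ Finset.univ.filter (fun i => i ≠ i0),
        co i • Matrix.vecMulVec (a i) (a i)) + N)
    (hκ0 : 0 < κ) (hκ1 : 2 * η ≤ κ) (hκ2 : κ ≤ 1 - 2 * η) :
    specNorm (M - κ • Matrix.vecMulVec (a i0) (a i0)) ≤ specNorm M - κ + 2 * ε ∧
      ∀ (u : Fin d → ℝ) (μ : ℝ), u ⬝ᵥ u = 1 → M.mulVec u = μ • u →
        |μ| = specNorm M → 1 - 2 * ε / κ ≤ (u ⬝ᵥ a i0) ^ 2 := by
  have hε0 : 0 ≤ ε := le_trans (norm_nonneg _) hN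
  set P : Fin n → Matrix (Fin d) (Fin d) ℝ := fun i => Matrix.vecMulVec (a i) (a i) with hP
  have horth : Orthonormal ℝ (fun i : Fin n => ev (a i)) := by
    rw [orthonormal_iff_ite]
    intro i j
    rw [ev_inner, ha]
  have hck : η ≤ c - κ := by linarith
  have hck0 : 0 ≤ c - κ := le_trans hη0 hck
  set b : Fin n → ℝ := fun i => if i = i0 then c - κ else co i with hb
  have hbabs : ∀ i, |b i| ≤ c - κ := by
    intro i
    rw [hb]
    by_cases h : i = i0
    · simp [h, abs_of_nonneg hck0]
    · simp only [h, if_false]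
      rcases hco i h with ⟨h1, h2⟩
      rw [abs_of_nonneg h1]; linarith
  set S : Matrix (Fin d) (Fin d) ℝ := ∑ i, b i • P i with hS
  have hSnorm : specNorm S ≤ c - κ := by
    apply specNorm_le_bound _ _ hck0
    intro x
    have hmv : S.mulVec x = ∑ i, (b i * (a i ⬝ᵥ x)) • a i := by
      rw [hS, sum_mulVec']
      refine Finset.sum_congr rfl fun i _ => ?_
      rw [smul_mulVec, hP, vecMulVec_mulVec', smul_smul]
    have hev : ev (S.mulVec x) = ∑ i, (b i * (a i ⬝ᵥ x)) • ev (a i) := by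
      rw [hmv]
      simp [ev]
    have hnsq : ‖ev (S.mulVec x)‖ ^ 2 = ∑ i, (b i * (a i ⬝ᵥ x)) ^ 2 := by
      rw [hev, ← real_inner_self_eq_norm_sq, horth.inner_sum]
      simp [sq]
    have hbessel : ∑ i, (a i ⬝ᵥ x) ^ 2 ≤ ‖ev x‖ ^ 2 := by
      have := horth.sum_inner_products_le (s := Finset.univ) (ev x)
      simpa [ev_inner, sq_abs] using this
    have h1 : ‖ev (S.mulVec x)‖ ^ 2 ≤ (c - κ) ^ 2 * ‖ev x‖ ^ 2 := by
      rw [hnsq]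
      calc ∑ i, (b i * (a i ⬝ᵥ x)) ^ 2 ≤ ∑ i, (c - κ) ^ 2 * (a i ⬝ᵥ x) ^ 2 := by
            refine Finset.sum_le_sum fun i _ => ?_
            have hb2 : (b i) ^ 2 ≤ (c - κ) ^ 2 := by
              have h := hbabs i
              have h' := abs_nonneg (b i)
              nlinarith [sq_abs (b i)]
            have heq : (b i * (a i ⬝ᵥ x)) ^ 2 = (b i) ^ 2 * (a i ⬝ᵥ x) ^ 2 := by ring
            rw [heq]
            exact mul_le_mul_of_nonneg_right hb2 (sq_nonneg _)
        _ = (c - κ) ^ 2 * ∑ i, (a i ⬝ᵥ x) ^ 2 := by rw [Finset.mul_sum]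
        _ ≤ (c - κ) ^ 2 * ‖ev x‖ ^ 2 := by nlinarith [sq_nonneg (c - κ)]
    nlinarith [norm_nonneg (ev (S.mulVec x)), norm_nonneg (ev x),
      mul_nonneg hck0 (norm_nonneg (ev x))]
  have hSsplit : S = (c - κ) • P i0 +
      ∑ i ∈ Finset.univ.filter (fun i => i ≠ i0), co i • P i := by
    rw [hS, ← Finset.add_sum_erase Finset.univ _ (Finset.mem_univ i0)]
    congr 1
    · simp [hb]
    · rw [Finset.filter_ne']
      refine Finset.sum_congr rfl fun i hi => ?_
      rw [hb]
      simp [(Finset.mem_erase.mp hi).1]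
  have hMS : M - κ • P i0 = S + N := by
    rw [hM, hSsplit]
    simp only [hP]
    module
  have key1 : specNorm (M - κ • P i0) ≤ (c - κ) + ε := by
    rw [hMS]
    exact le_trans (specNorm_add_le S N) (by linarith)
  -- lower bound on specNorm M
  have ha00 : a i0 ⬝ᵥ a i0 = 1 := by rw [ha]; simp
  have hMv : M.mulVec (a i0) = c • a i0 + N.mulVec (a i0) := by
    rw [hM, add_mulVec, add_mulVec, smul_mulVec, vecMulVec_mulVec', ha00, one_smul,
      sum_mulVec']
    have : ∑ i ∈ Finset.univ.filter (fun i => i ≠ i0),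
        (co i • Matrix.vecMulVec (a i) (a i)).mulVec (a i0) = 0 := by
      refine Finset.sum_eq_zero fun i hi => ?_
      have hine : i ≠ i0 := (Finset.mem_filter.mp hi).2
      rw [smul_mulVec, vecMulVec_mulVec', ha]
      simp [hine]
    rw [this, add_zero]
  have hquadM : a i0 ⬝ᵥ M.mulVec (a i0) = c + a i0 ⬝ᵥ N.mulVec (a i0) := by
    rw [hMv, dotProduct_add, dotProduct_smul, ha00]
    simp
  have hNq : |a i0 ⬝ᵥ N.mulVec (a i0)| ≤ ε :=
    le_trans (specNorm_quadform N (a i0) ha00) hN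
  have hMq : |a i0 ⬝ᵥ M.mulVec (a i0)| ≤ specNorm M := specNorm_quadform M (a i0) ha00
  have hMlb : c - ε ≤ specNorm M := by
    have h1 := le_abs_self (a i0 ⬝ᵥ M.mulVec (a i0))
    have h2 := neg_abs_le (a i0 ⬝ᵥ N.mulVec (a i0))
    rw [hquadM] at h1 hMq
    linarith
  constructor
  · exact le_trans key1 (by linarith)
  · intro u μ hu hMu hμ
    set t : ℝ := (u ⬝ᵥ a i0) ^ 2 with ht
    have htnn : 0 ≤ t := sq_nonneg _
    have hq : u ⬝ᵥ (M - κ • P i0).mulVec u = μ - κ * t := by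
      rw [Matrix.sub_mulVec, smul_mulVec, vecMulVec_mulVec', hMu, dotProduct_sub,
        dotProduct_smul, dotProduct_smul, dotProduct_smul, hu, dotProduct_comm (a i0) u, ht]
      simp only [smul_eq_mul]
      ring
    have habs : |μ - κ * t| ≤ specNorm (M - κ • P i0) := by
      rw [← hq]
      exact specNorm_quadform _ u hu
    have hkey : |μ - κ * t| ≤ |μ| - κ + 2 * ε := by
      rw [hμ]
      exact le_trans habs (le_trans key1 (by linarith))
    rcases le_or_gt 0 μ with hμpos | hμneg
    · rw [abs_of_nonneg hμpos] at hkey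
      have h1 := le_abs_self (μ - κ * t)
      have h2 : κ * (1 - t) ≤ 2 * ε := by linarith
      have h3 : 1 - t ≤ 2 * ε / κ := by
        rw [le_div_iff₀ hκ0]; linarith
      linarith
    · rw [abs_of_neg hμneg] at hkey
      have h1 := neg_abs_le (μ - κ * t)
      have h2 : κ * (1 + t) ≤ 2 * ε := by linarith
      have h3 : 1 + t ≤ 2 * ε / κ := by
        rw [le_div_iff₀ hκ0]; linarith
      linarith
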